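/- Suppose \mu is singular of cofinality \kappa, \theta < \kappa, and the strong polarized relation \binom{\mu^+}{\mu} \to \binom{\mu^+}{\mu}^{1,1}_\theta holds. Then 2^\mu > \mu^+. -/

import Mathlib

open Cardinal

open Set in
lemma existsNonconstFun {Y : Type} {μ : Cardinal} (hμ : ℵ₀ ≤ μ)
    {J : Type} [LinearOrder J] [WellFoundedLT J]
    (hJ : ∀ j : J, #(Set.Iio j) < μ)
    (F : J → Set Y) (hF : ∀ j, #(F j) = μ) :
    ∃ f : Y → Bool, ∀ j, ∃ a ∈ F j, ∃ b ∈ F j, f a ≠ f b := by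
  classical
  have key : ∀ (j : J) (h : ∀ k, k < j → Y × Y), ∃ p : Y × Y,
      p.1 ∈ F j ∧ p.2 ∈ F j ∧ p.1 ≠ p.2 ∧ ∀ k (hk : k < j),
        p.1 ≠ (h k hk).1 ∧ p.1 ≠ (h k hk).2 ∧ p.2 ≠ (h k hk).1 ∧ p.2 ≠ (h k hk).2 := by
    intro j h
    set U : Set Y := {y | ∃ k, ∃ hk : k < j, y = (h k hk).1 ∨ y = (h k hk).2} with hU
    have hUcard : #U < μ := by
      have hle : #U ≤ #(Set.Iio j) * 2 := by
        have : U ⊆ Set.range (fun p : (Set.Iio j) × Bool =>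
            if p.2 then (h p.1.1 p.1.2).1 else (h p.1.1 p.1.2).2) := by
          rintro y ⟨k, hk, (rfl | rfl)⟩
          · exact ⟨⟨⟨k, hk⟩, true⟩, rfl⟩
          · exact ⟨⟨⟨k, hk⟩, false⟩, rfl⟩
        calc #U ≤ #(Set.range (fun p : (Set.Iio j) × Bool =>
              if p.2 then (h p.1.1 p.1.2).1 else (h p.1.1 p.1.2).2)) := mk_le_mk_of_subset this
          _ ≤ #((Set.Iio j) × Bool) := mk_range_le
          _ = #(Set.Iio j) * 2 := by rw [mk_prod, mk_bool]; simp
      exact hle.trans_lt (mul_lt_of_lt hμ (hJ j) ((nat_lt_aleph0 2).trans_le hμ))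
    have hS : 1 < #(F j \ U : Set Y) := by
      by_contra hc
      push_neg at hc
      have hsub : F j ⊆ (F j \ U) ∪ U := by
        intro y hy
        by_cases hyU : y ∈ U
        · exact Or.inr hyU
        · exact Or.inl ⟨hy, hyU⟩
      have : μ ≤ #((F j \ U) ∪ U : Set Y) := (hF j) ▸ mk_le_mk_of_subset hsub
      have h2 : #((F j \ U) ∪ U : Set Y) < μ := by
        refine (mk_union_le _ _).trans_lt (add_lt_of_lt hμ ?_ hUcard)
        exact hc.trans_lt (one_lt_aleph0.trans_le hμ)
      exact absurd this h2.not_ge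
    rw [one_lt_iff_nontrivial] at hS
    obtain ⟨⟨a, ha⟩, ⟨b, hb⟩, hab⟩ := hS
    refine ⟨(a, b), ha.1, hb.1, by simpa using hab, ?_⟩
    intro k hk
    have hna : a ∉ U := ha.2
    have hnb : b ∉ U := hb.2
    exact ⟨fun e => hna ⟨k, hk, Or.inl e⟩, fun e => hna ⟨k, hk, Or.inr e⟩,
      fun e => hnb ⟨k, hk, Or.inl e⟩, fun e => hnb ⟨k, hk, Or.inr e⟩⟩
  let g : J → Y × Y := IsWellFounded.fix (· < ·) fun j rec => (key j rec).choose
  have hg : ∀ j, g j = (key j fun k _ => g k).choose := fun j =>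
    IsWellFounded.fix_eq (· < ·) _ j
  have spec : ∀ j, (g j).1 ∈ F j ∧ (g j).2 ∈ F j ∧ (g j).1 ≠ (g j).2 ∧
      ∀ k (hk : k < j), (g j).1 ≠ (g k).1 ∧ (g j).1 ≠ (g k).2 ∧
        (g j).2 ≠ (g k).1 ∧ (g j).2 ≠ (g k).2 := by
    intro j
    rw [hg j]
    exact (key j fun k _ => g k).choose_spec
  refine ⟨fun y => if ∃ k, (g k).1 = y then true else false, fun j => ?_⟩
  refine ⟨(g j).1, (spec j).1, (g j).2, (spec j).2.1, ?_⟩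
  show (if ∃ k, (g k).1 = (g j).1 then true else false) ≠
    (if ∃ k, (g k).1 = (g j).2 then true else false)
  rw [if_pos ⟨j, rfl⟩, if_neg]
  · simp
  · rintro ⟨k, hk⟩
    rcases lt_trichotomy k j with h | h | h
    · exact ((spec j).2.2.2 k h).2.2.1 hk.symm
    · exact (spec j).2.2.1 (h ▸ hk)
    · exact ((spec k).2.2.2 j h).2.1 hk

/-- If `μ` is singular of cofinality `κ`, `2 ≤ θ < κ`, and the strong polarized
    relation `(μ⁺, μ) → (μ⁺, μ)^{1,1}_θ` holds, then `2 ^ μ > μ⁺`. -/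
theorem stmt_19 (μ κ θ : Cardinal) (hcof : μ.ord.cof = κ) (hsing : κ < μ)
    (hθ2 : 2 ≤ θ) (hθ : θ < κ)
    (hpol : ∀ (X Y T : Type), #X = Order.succ μ → #Y = μ → #T = θ →
      ∀ c : X → Y → T, ∃ (A : Set X) (B : Set Y),
        #A = Order.succ μ ∧ #B = μ ∧ ∃ i : T, ∀ a ∈ A, ∀ b ∈ B, c a b = i) :
    Order.succ μ < 2 ^ μ := by
  by_contra hcon
  have heq : (2 : Cardinal) ^ μ = Order.succ μ :=
    le_antisymm (not_lt.mp hcon) (Order.succ_le_of_lt (cantor μ))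
  -- μ is infinite
  have hκ2 : (2 : Cardinal) < κ := lt_of_le_of_lt hθ2 hθ
  have hκω : ℵ₀ ≤ κ := by
    rcases Ordinal.zero_or_succ_or_isSuccLimit μ.ord with h0 | ⟨o, ho⟩ | hlim
    · rw [← hcof, h0, Ordinal.cof_zero] at hκ2; exact absurd hκ2 (by norm_num)
    · rw [← hcof, ← ho, Ordinal.cof_succ] at hκ2; exact absurd hκ2 (by norm_num)
    · rw [← hcof]; exact Ordinal.aleph0_le_cof.mpr hlim
  have hμ : ℵ₀ ≤ μ := hκω.trans hsing.le
  set X := (Order.succ μ).ord.ToType with hXdef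
  set Y := μ.ord.ToType with hYdef
  set T := θ.out with hTdef
  have hX : #X = Order.succ μ := by rw [hXdef, Cardinal.mk_toType, card_ord]
  have hY : #Y = μ := by rw [hYdef, Cardinal.mk_toType, card_ord]
  have hT : #T = θ := mk_out θ
  have hTnt : Nontrivial T := by
    rw [← one_lt_iff_nontrivial, hT]; exact lt_of_lt_of_le one_lt_two hθ2
  obtain ⟨t0, t1, ht01⟩ := hTnt.exists_pair_ne
  have hGex : #X = #(Set Y) := by rw [hX, mk_set, hY, heq]
  obtain ⟨G⟩ : Nonempty (X ≃ Set Y) := Cardinal.eq.mp hGex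
  -- for each x, a function nonconstant on all relevant earlier sets
  have main : ∀ x : X, ∃ fx : Y → Bool, ∀ z : X, z < x → #(G z) = μ →
      ∃ a ∈ G z, ∃ b ∈ G z, fx a ≠ fx b := by
    intro x
    have hIio : #(Set.Iio x) ≤ μ := by
      have := Cardinal.mk_Iio_ord_toType x
      rwa [Order.lt_succ_iff] at this
    obtain ⟨ι⟩ : Nonempty ((Set.Iio x) ↪ Y) := by
      rw [← Cardinal.le_def, hY]; exact hIio
    classical
    set F : Y → Set Y := fun j =>
      if h : ∃ w : (Set.Iio x), ι w = j ∧ #(G w.1) = μ then G h.choose.1 else Set.univ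
      with hFdef
    have hF : ∀ j, #(F j) = μ := by
      intro j
      rw [hFdef]
      by_cases h : ∃ w : (Set.Iio x), ι w = j ∧ #(G w.1) = μ
      · simp only [dif_pos h]; exact h.choose_spec.2
      · simp only [dif_neg h, mk_univ, hY]
    obtain ⟨fx, hfx⟩ := existsNonconstFun hμ (fun j => Cardinal.mk_Iio_ord_toType j) F hF
    refine ⟨fx, fun z hz hmk => ?_⟩
    have h : ∃ w : (Set.Iio x), ι w = ι ⟨z, hz⟩ ∧ #(G w.1) = μ := ⟨⟨z, hz⟩, rfl, hmk⟩
    have hw : h.choose = ⟨z, hz⟩ := ι.injective h.choose_spec.1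
    have := hfx (ι ⟨z, hz⟩)
    rw [hFdef] at this
    simp only [dif_pos h, hw] at this
    exact this
  choose f hf using main
  set c : X → Y → T := fun x y => if f x y then t0 else t1 with hc
  obtain ⟨A, B, hA, hB, i, hi⟩ := hpol X Y T hX hY hT c
  set z := G.symm B with hz
  have hGz : G z = B := G.apply_symm_apply B
  have hex : ∃ a ∈ A, z < a := by
    by_contra hno
    push_neg at hno
    have hsub : A ⊆ Set.Iic z := fun a ha => hno a ha
    have h1 : #A ≤ #(Set.Iic z) := mk_le_mk_of_subset hsub
    have h2 : #(Set.Iic z) ≤ μ := by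
      have : Set.Iic z ⊆ Set.Iio z ∪ {z} := by
        intro y hy
        rcases (Set.mem_Iic.mp hy).lt_or_eq with h | h
        · exact Or.inl h
        · exact Or.inr (by simp [h])
      calc #(Set.Iic z) ≤ #((Set.Iio z ∪ {z} : Set X)) := mk_le_mk_of_subset this
        _ ≤ #(Set.Iio z) + #({z} : Set X) := mk_union_le _ _
        _ ≤ μ + 1 := by
            refine add_le_add ?_ (by simp)
            have := Cardinal.mk_Iio_ord_toType z
            rwa [Order.lt_succ_iff] at this
        _ = μ := Cardinal.add_one_eq hμ
    have := hA ▸ h1.trans h2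
    exact absurd this (Order.lt_succ μ).not_ge
  obtain ⟨a, haA, hza⟩ := hex
  have hmk : #(G z) = μ := by rw [hGz]; exact hB
  obtain ⟨y0, hy0, y1, hy1, hne⟩ := hf a z hza hmk
  rw [hGz] at hy0 hy1
  have e0 : c a y0 = i := hi a haA y0 hy0
  have e1 : c a y1 = i := hi a haA y1 hy1
  have key : (if f a y0 then t0 else t1) = (if f a y1 then t0 else t1) := e0.trans e1.symm
  cases h0 : f a y0 <;> cases h1 : f a y1 <;> rw [h0, h1] at key
  · exact hne (h0.trans h1.symm)
  · exact ht01 (by simpa using key.symm)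
  · exact ht01 (by simpa using key)
  · exact hne (h0.trans h1.symm)
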